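/- arXiv:1809.08046 — 2 statements merged into one kernel-verified Lean document; each statement's English description precedes it below -/
import Mathlib

section
/- Let L > 0 and let a, b ∈ [0,1]. Then there exists a constant C ≥ 0, depending only on a, b and L, such that for every continuously differentiable function ρ : [0,L] → (0,1), defining the entropy variable u(x) = log ρ(x) − log(1−ρ(x)) − x, one has ∫₀^L ρ(x)(1−ρ(x))·u'(x)² dx − a(1−ρ(0))·u(0) + b·ρ(L)·u(L) ≥ ∫₀^L ρ'(x)² dx − C. -/
open Set

private lemma xlogx_ge (t : ℝ) (ht : 0 < t) : -1 ≤ t * Real.log t := by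
  have h := Real.log_le_sub_one_of_pos (inv_pos.mpr ht)
  rw [Real.log_inv] at h
  nlinarith [mul_le_mul_of_nonneg_left h ht.le, mul_inv_cancel₀ ht.ne']

/-- One-dimensional a-priori entropy dissipation lemma: for `L > 0`, `a, b ∈ [0,1]`, there is
a constant `C ≥ 0` (depending only on `a`, `b`, `L`) such that for every `C¹` function
`ρ : [0,L] → (0,1)`, with entropy variable `u(x) = log ρ(x) − log(1−ρ(x)) − x`,
`∫₀^L ρ(1−ρ)(u')² dx − a(1−ρ(0))u(0) + b ρ(L) u(L) ≥ ∫₀^L (ρ')² dx − C`. -/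
theorem apriori_entropy_dissipation_1d (L : ℝ) (hL : 0 < L)
    (a b : ℝ) (ha : a ∈ Set.Icc (0:ℝ) 1) (hb : b ∈ Set.Icc (0:ℝ) 1) :
    ∃ C : ℝ, 0 ≤ C ∧
      ∀ ρ : ℝ → ℝ, ContDiffOn ℝ 1 ρ (Set.Icc 0 L) →
        (∀ x ∈ Set.Icc (0:ℝ) L, ρ x ∈ Set.Ioo (0:ℝ) 1) →
        (∫ x in (0:ℝ)..L,
            ρ x * (1 - ρ x) *
              (derivWithin (fun y => Real.log (ρ y) - Real.log (1 - ρ y) - y)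
                (Set.Icc 0 L) x) ^ 2)
          - a * (1 - ρ 0) * (Real.log (ρ 0) - Real.log (1 - ρ 0) - 0)
          + b * ρ L * (Real.log (ρ L) - Real.log (1 - ρ L) - L)
        ≥ (∫ x in (0:ℝ)..L, (derivWithin ρ (Set.Icc 0 L) x) ^ 2) - C := by
  obtain ⟨ha0, ha1⟩ := ha
  obtain ⟨hb0, hb1⟩ := hb
  have hL0 : (0:ℝ) ≤ L := hL.le
  refine ⟨L + 4, by linarith, ?_⟩
  intro ρ hρ hmem
  have hus : UniqueDiffOn ℝ (Set.Icc (0:ℝ) L) := uniqueDiffOn_Icc hL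
  have hdiff : DifferentiableOn ℝ ρ (Set.Icc 0 L) := hρ.differentiableOn one_ne_zero
  set g := derivWithin ρ (Set.Icc (0:ℝ) L) with hg
  have hgc : ContinuousOn g (Set.Icc 0 L) := hρ.continuousOn_derivWithin hus le_rfl
  have hρc : ContinuousOn ρ (Set.Icc 0 L) := hρ.continuousOn
  have hρ0 := hmem 0 ⟨le_rfl, hL0⟩
  have hρL := hmem L ⟨hL0, le_rfl⟩
  -- derivative of the entropy variable
  have hu' : ∀ x ∈ Set.Icc (0:ℝ) L,
      derivWithin (fun y => Real.log (ρ y) - Real.log (1 - ρ y) - y) (Set.Icc 0 L) x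
        = g x / (ρ x * (1 - ρ x)) - 1 := by
    intro x hx
    obtain ⟨h0, h1⟩ := hmem x hx
    have hρd : HasDerivWithinAt ρ (g x) (Set.Icc 0 L) x := (hdiff x hx).hasDerivWithinAt
    have hA : HasDerivWithinAt (fun y => Real.log (ρ y)) ((ρ x)⁻¹ * g x) (Set.Icc 0 L) x :=
      (Real.hasDerivAt_log h0.ne').comp_hasDerivWithinAt x hρd
    have hsub : HasDerivWithinAt (fun y => 1 - ρ y) (0 - g x) (Set.Icc 0 L) x :=
      (hasDerivWithinAt_const x _ 1).sub hρd
    have hB : HasDerivWithinAt (fun y => Real.log (1 - ρ y)) ((1 - ρ x)⁻¹ * (0 - g x))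
        (Set.Icc 0 L) x :=
      by have h2 := (Real.hasDerivAt_log (sub_pos.mpr h1).ne').comp_hasDerivWithinAt x hsub; exact h2
    have hC : HasDerivWithinAt (fun y => Real.log (ρ y) - Real.log (1 - ρ y) - y)
        ((ρ x)⁻¹ * g x - (1 - ρ x)⁻¹ * (0 - g x) - 1) (Set.Icc 0 L) x :=
      (hA.sub hB).sub (hasDerivWithinAt_id x _)
    rw [hC.derivWithin (hus x hx)]
    have h0' : ρ x ≠ 0 := h0.ne'
    have h1' : (1:ℝ) - ρ x ≠ 0 := by linarith
    field_simp
    ring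
  -- continuity facts
  have hmc : ContinuousOn (fun x => ρ x * (1 - ρ x)) (Set.Icc 0 L) :=
    hρc.mul (continuousOn_const.sub hρc)
  have hmne : ∀ x ∈ Set.Icc (0:ℝ) L, ρ x * (1 - ρ x) ≠ 0 := by
    intro x hx
    obtain ⟨h0, h1⟩ := hmem x hx
    have : 0 < ρ x * (1 - ρ x) := mul_pos h0 (by linarith)
    exact this.ne'
  have hfc : ContinuousOn (fun x => ρ x * (1 - ρ x) * (g x / (ρ x * (1 - ρ x)) - 1) ^ 2)
      (Set.Icc 0 L) :=
    hmc.mul (((hgc.div hmc hmne).sub continuousOn_const).pow 2)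
  have hqc : ContinuousOn (fun x => g x ^ 2 - 2 * g x) (Set.Icc 0 L) :=
    (hgc.pow 2).sub (continuousOn_const.mul hgc)
  -- rewrite the entropy dissipation integrand
  have hIuf : (∫ x in (0:ℝ)..L,
      ρ x * (1 - ρ x) *
        (derivWithin (fun y => Real.log (ρ y) - Real.log (1 - ρ y) - y) (Set.Icc 0 L) x) ^ 2)
      = ∫ x in (0:ℝ)..L, ρ x * (1 - ρ x) * (g x / (ρ x * (1 - ρ x)) - 1) ^ 2 := by
    apply intervalIntegral.integral_congr
    intro x hx
    rw [Set.uIcc_of_le hL0] at hx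
    simp only [hu' x hx]
  -- FTC for ∫ ρ'
  have hFTC : ∫ x in (0:ℝ)..L, g x = ρ L - ρ 0 := by
    refine intervalIntegral.integral_eq_sub_of_hasDeriv_right_of_le hL0 hρc ?_
      (hgc.intervalIntegrable_of_Icc hL0)
    intro x hx
    exact (((hdiff x (Set.Ioo_subset_Icc_self hx)).hasDerivWithinAt).hasDerivAt
      (Icc_mem_nhds hx.1 hx.2)).hasDerivWithinAt
  -- pointwise inequality and integral comparison
  have hmono : (∫ x in (0:ℝ)..L, (g x ^ 2 - 2 * g x))
      ≤ ∫ x in (0:ℝ)..L, ρ x * (1 - ρ x) * (g x / (ρ x * (1 - ρ x)) - 1) ^ 2 := by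
    refine intervalIntegral.integral_mono_on hL0 (hqc.intervalIntegrable_of_Icc hL0)
      (hfc.intervalIntegrable_of_Icc hL0) ?_
    intro x hx
    obtain ⟨h0, h1⟩ := hmem x hx
    have hm : 0 < ρ x * (1 - ρ x) := mul_pos h0 (by linarith)
    have hm1 : ρ x * (1 - ρ x) ≤ 1 := by nlinarith
    have hexp : ρ x * (1 - ρ x) * (g x / (ρ x * (1 - ρ x)) - 1) ^ 2
        = g x ^ 2 / (ρ x * (1 - ρ x)) - 2 * g x + ρ x * (1 - ρ x) := by
      field_simp
      ring
    rw [hexp]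
    have hdiv : g x ^ 2 ≤ g x ^ 2 / (ρ x * (1 - ρ x)) := by
      rw [le_div_iff₀ hm]
      nlinarith [sq_nonneg (g x)]
    linarith
  -- split the lower-bound integral
  have hsplit : (∫ x in (0:ℝ)..L, (g x ^ 2 - 2 * g x))
      = (∫ x in (0:ℝ)..L, g x ^ 2) - 2 * (ρ L - ρ 0) := by
    rw [intervalIntegral.integral_sub (f := fun x => g x ^ 2) ((hgc.pow 2).intervalIntegrable_of_Icc hL0)
      ((hgc.intervalIntegrable_of_Icc hL0).const_mul 2),
      intervalIntegral.integral_const_mul, hFTC]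
  -- boundary term at 0
  have hbd0 : -1 ≤ -(a * (1 - ρ 0) * (Real.log (ρ 0) - Real.log (1 - ρ 0) - 0)) := by
    obtain ⟨h0, h1⟩ := hρ0
    have hl1 : Real.log (ρ 0) ≤ 0 := Real.log_nonpos h0.le h1.le
    have hk : -1 ≤ (1 - ρ 0) * Real.log (1 - ρ 0) := xlogx_ge _ (by linarith)
    have hx1 : 0 ≤ a * (1 - ρ 0) := mul_nonneg ha0 (by linarith)
    have hx2 : a * (1 - ρ 0) * Real.log (ρ 0) ≤ 0 := mul_nonpos_of_nonneg_of_nonpos hx1 hl1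
    have hx3 : a * (-1) ≤ a * ((1 - ρ 0) * Real.log (1 - ρ 0)) :=
      mul_le_mul_of_nonneg_left hk ha0
    nlinarith [hx2, hx3]
  -- boundary term at L
  have hbdL : -(1 + L) ≤ b * ρ L * (Real.log (ρ L) - Real.log (1 - ρ L) - L) := by
    obtain ⟨h0, h1⟩ := hρL
    have hl1 : Real.log (1 - ρ L) ≤ 0 := Real.log_nonpos (by linarith) (by linarith)
    have hk : -1 ≤ ρ L * Real.log (ρ L) := xlogx_ge _ h0
    have hx1 : 0 ≤ b * ρ L := mul_nonneg hb0 h0.le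
    have hx2 : b * ρ L ≤ 1 := by nlinarith
    have hx3 : b * (-1) ≤ b * (ρ L * Real.log (ρ L)) := mul_le_mul_of_nonneg_left hk hb0
    have hx4 : b * ρ L * Real.log (1 - ρ L) ≤ 0 := mul_nonpos_of_nonneg_of_nonpos hx1 hl1
    nlinarith [hx3, hx4, mul_le_mul_of_nonneg_right hx2 hL0]
  -- assemble
  rw [hIuf, ge_iff_le]
  have hmono' : (∫ x in (0:ℝ)..L, g x ^ 2) - 2 * (ρ L - ρ 0)
      ≤ ∫ x in (0:ℝ)..L, ρ x * (1 - ρ x) * (g x / (ρ x * (1 - ρ x)) - 1) ^ 2 := by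
    rw [← hsplit]; exact hmono
  obtain ⟨h00, h01⟩ := hρ0
  obtain ⟨hL0', hL1⟩ := hρL
  linarith
end

section
/- Let L, σ, v be positive reals and suppose a = b = v/2. Let ρ : [0,L] → ℝ be twice continuously differentiable with 0 ≤ ρ(x) ≤ 1 for all x, satisfying d/dx( σ²·ρ'(x) − v(1−ρ(x))·ρ(x) ) = 0 on (0,L), together with the boundary conditions −σ²·ρ'(0) + v(1−ρ(0))·ρ(0) = (v/2)(1 − ρ(0)) and −σ²·ρ'(L) + v(1−ρ(L))·ρ(L) = (v/2)·ρ(L). Then ρ(x) = 1/2 for all x ∈ [0,L]. -/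
/-- A function continuous on `[A,B]`, differentiable on `(A,B)` with zero derivative there,
is constant on `[A,B]`. -/
private lemma constOn_aux {f : ℝ → ℝ} {A B : ℝ} (hAB : A ≤ B)
    (hc : ContinuousOn f (Set.Icc A B))
    (hd : DifferentiableOn ℝ f (Set.Ioo A B))
    (h0 : ∀ x ∈ Set.Ioo A B, deriv f x = 0) :
    ∀ x ∈ Set.Icc A B, f x = f A := by
  intro x hx
  have hmono : MonotoneOn f (Set.Icc A B) :=
    monotoneOn_of_deriv_nonneg (convex_Icc A B) hc
      (by rwa [interior_Icc]) (fun y hy => by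
        rw [interior_Icc] at hy; exact (h0 y hy).ge)
  have hanti : AntitoneOn f (Set.Icc A B) :=
    antitoneOn_of_deriv_nonpos (convex_Icc A B) hc
      (by rwa [interior_Icc]) (fun y hy => by
        rw [interior_Icc] at hy; exact (h0 y hy).le)
  have hA : A ∈ Set.Icc A B := ⟨le_refl A, hAB⟩
  exact le_antisymm (hanti hA hx hx.1) (hmono hA hx hx.1)

/-- Uniqueness of the steady state in the symmetric maximal current case: if `a = b = v/2`
and `ρ : [0,L] → [0,1]` is a `C²` solution of `(σ²ρ' − v(1−ρ)ρ)' = 0` on `(0,L)` with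
boundary conditions `−σ²ρ'(0) + v(1−ρ(0))ρ(0) = (v/2)(1−ρ(0))` and
`−σ²ρ'(L) + v(1−ρ(L))ρ(L) = (v/2)ρ(L)`, then `ρ ≡ 1/2` on `[0,L]`. -/
theorem constant_half_is_unique_stationary (L σ v a b : ℝ)
    (hL : 0 < L) (hσ : 0 < σ) (hv : 0 < v) (ha : a = v / 2) (hb : b = v / 2)
    (ρ : ℝ → ℝ) (hreg : ContDiff ℝ 2 ρ)
    (hval : ∀ x ∈ Set.Icc (0:ℝ) L, ρ x ∈ Set.Icc (0:ℝ) 1)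
    (hode : ∀ x ∈ Set.Ioo (0:ℝ) L,
      deriv (fun y => σ ^ 2 * deriv ρ y - v * (1 - ρ y) * ρ y) x = 0)
    (hbc0 : -σ ^ 2 * deriv ρ 0 + v * (1 - ρ 0) * ρ 0 = (v / 2) * (1 - ρ 0))
    (hbcL : -σ ^ 2 * deriv ρ L + v * (1 - ρ L) * ρ L = (v / 2) * ρ L) :
    ∀ x ∈ Set.Icc (0:ℝ) L, ρ x = 1 / 2 := by
  have hσ2 : (0:ℝ) < σ ^ 2 := by positivity
  have hσ2' : σ ^ 2 ≠ 0 := ne_of_gt hσ2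
  have h0L : (0:ℝ) ∈ Set.Icc (0:ℝ) L := ⟨le_refl 0, hL.le⟩
  have hLL : L ∈ Set.Icc (0:ℝ) L := ⟨hL.le, le_refl L⟩
  have hρd : Differentiable ℝ ρ := hreg.differentiable (by norm_num)
  have hregd : Differentiable ℝ (deriv ρ) := by
    have hreg2 : ContDiff ℝ (1+1) ρ := by
      rw [show ((1:WithTop ℕ∞)+1) = 2 from rfl]; exact hreg
    exact (contDiff_succ_iff_deriv.mp hreg2).2.2.differentiable one_ne_zero
  -- The flux is constant on [0, L].
  have hFdiff : Differentiable ℝ (fun y => σ ^ 2 * deriv ρ y - v * (1 - ρ y) * ρ y) :=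
    ((hregd.const_mul _).sub (((differentiable_const v).mul
      ((differentiable_const 1).sub hρd)).mul hρd))
  have hFconst : ∀ x ∈ Set.Icc (0:ℝ) L,
      σ ^ 2 * deriv ρ x - v * (1 - ρ x) * ρ x
        = σ ^ 2 * deriv ρ 0 - v * (1 - ρ 0) * ρ 0 :=
    constOn_aux hL.le hFdiff.continuous.continuousOn hFdiff.differentiableOn hode
  -- Key pointwise derivative identity: σ²ρ' = v(c − g²) with c = g(0)/2, g = ρ − 1/2.
  have hone : ∀ x ∈ Set.Icc (0:ℝ) L,
      deriv ρ x = v * ((ρ 0 - 1/2)/2 - (ρ x - 1/2)^2) / σ ^ 2 := by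
    intro x hx
    rw [eq_div_iff hσ2']
    linear_combination (hFconst x hx) - hbc0
  -- Endpoint relation: ρ(L) = 1 − ρ(0).
  have hsum : ρ L = 1 - ρ 0 := by
    have h2 : v/2 * ρ L = v/2 * (1 - ρ 0) := by
      linear_combination -(hFconst L hLL) - hbcL + hbc0
    exact mul_left_cancel₀ (by positivity) h2
  -- The integral G of g = ρ − 1/2.
  have hcontg : Continuous (fun t : ℝ => ρ t - 1/2) := hρd.continuous.sub continuous_const
  set G : ℝ → ℝ := fun x => ∫ t in (0:ℝ)..x, (ρ t - 1/2) with hGdef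
  have hGd : ∀ x : ℝ, HasDerivAt G (ρ x - 1/2) x := fun x =>
    intervalIntegral.integral_hasDerivAt_right (hcontg.intervalIntegrable 0 x)
      (hcontg.stronglyMeasurableAtFilter _ _) hcontg.continuousAt
  have hG0 : G 0 = 0 := intervalIntegral.integral_same
  -- E · exp((2v/σ²)G) is constant, where E = g² − c.
  have hHd : ∀ x : ℝ, HasDerivAt
      (fun y => ((ρ y - 1/2)^2 - (ρ 0 - 1/2)/2) * Real.exp (2*v/σ^2 * G y))
      ((2 * (ρ x - 1/2) * deriv ρ x) * Real.exp (2*v/σ^2 * G x)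
        + ((ρ x - 1/2)^2 - (ρ 0 - 1/2)/2)
            * (Real.exp (2*v/σ^2 * G x) * (2*v/σ^2 * (ρ x - 1/2)))) x := by
    intro x
    have hE : HasDerivAt (fun y => (ρ y - 1/2)^2 - (ρ 0 - 1/2)/2)
        (2 * (ρ x - 1/2) * deriv ρ x) x := by
      have h1 := (((hρd x).hasDerivAt).sub_const (1/2)).pow 2
      have h2 := h1.sub_const ((ρ 0 - 1/2)/2)
      exact (h2 : HasDerivAt (fun y => (ρ y - 1/2)^2 - (ρ 0 - 1/2)/2) _ x).congr_deriv
        (by push_cast; ring)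
    have hExp : HasDerivAt (fun y => Real.exp (2*v/σ^2 * G y))
        (Real.exp (2*v/σ^2 * G x) * (2*v/σ^2 * (ρ x - 1/2))) x :=
      ((hGd x).const_mul (2*v/σ^2)).exp
    exact hE.mul hExp
  have hHzero : ∀ x ∈ Set.Icc (0:ℝ) L, HasDerivAt
      (fun y => ((ρ y - 1/2)^2 - (ρ 0 - 1/2)/2) * Real.exp (2*v/σ^2 * G y)) 0 x := by
    intro x hx
    have h := hHd x
    rw [hone x hx] at h
    convert h using 1
    field_simp
    ring
  have hHdiff : Differentiable ℝ
      (fun y => ((ρ y - 1/2)^2 - (ρ 0 - 1/2)/2) * Real.exp (2*v/σ^2 * G y)) :=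
    fun x => (hHd x).differentiableAt
  have hEval : ∀ x ∈ Set.Icc (0:ℝ) L,
      ((ρ x - 1/2)^2 - (ρ 0 - 1/2)/2) * Real.exp (2*v/σ^2 * G x)
        = (ρ 0 - 1/2)^2 - (ρ 0 - 1/2)/2 := by
    intro x hx
    have h := constOn_aux hL.le hHdiff.continuous.continuousOn hHdiff.differentiableOn
      (fun y hy => (hHzero y (Set.Ioo_subset_Icc_self hy)).deriv) x hx
    rw [h, hG0]
    simp
  -- Sign analysis on E(0) = g(0)² − g(0)/2.
  rcases lt_trichotomy ((ρ 0 - 1/2)^2 - (ρ 0 - 1/2)/2) 0 with hE0 | hE0 | hE0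
  · -- E(0) < 0 : ρ is strictly increasing, but ρ(0) > 1/2 forces ρ(L) < ρ(0).
    exfalso
    have hmono : StrictMonoOn ρ (Set.Icc (0:ℝ) L) := by
      apply strictMonoOn_of_deriv_pos (convex_Icc 0 L) hρd.continuous.continuousOn
      intro x hx
      rw [interior_Icc] at hx
      have hxI := Set.Ioo_subset_Icc_self hx
      rw [hone x hxI]
      have h1 := hEval x hxI
      have h2 := Real.exp_pos (2*v/σ^2 * G x)
      have h3 : (ρ x - 1/2)^2 - (ρ 0 - 1/2)/2 < 0 := by nlinarith
      exact div_pos (mul_pos hv (by linarith)) hσ2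
    have h01 : ρ 0 < ρ L := hmono h0L hLL hL
    nlinarith [sq_nonneg (ρ 0 - 1/2)]
  · -- E(0) = 0 : ρ is constant, hence ≡ 1/2.
    have hEzero : ∀ x ∈ Set.Icc (0:ℝ) L, (ρ x - 1/2)^2 - (ρ 0 - 1/2)/2 = 0 := by
      intro x hx
      have h1 := hEval x hx
      rw [hE0] at h1
      rcases mul_eq_zero.mp h1 with h3 | h3
      · exact h3
      · exact absurd h3 (Real.exp_ne_zero _)
    have hdzero : ∀ x ∈ Set.Ioo (0:ℝ) L, deriv ρ x = 0 := by
      intro x hx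
      rw [hone x (Set.Ioo_subset_Icc_self hx)]
      have h1 := hEzero x (Set.Ioo_subset_Icc_self hx)
      have h2 : (ρ 0 - 1/2)/2 - (ρ x - 1/2)^2 = 0 := by linarith
      rw [h2, mul_zero, zero_div]
    have hconstρ : ∀ x ∈ Set.Icc (0:ℝ) L, ρ x = ρ 0 :=
      constOn_aux hL.le hρd.continuous.continuousOn hρd.differentiableOn hdzero
    have hρ0 : ρ 0 = 1/2 := by
      have h1 := hconstρ L hLL
      linarith
    intro x hx
    have h1 := hEzero x hx
    rw [hρ0] at h1
    have h2 : (ρ x - 1/2)^2 = 0 := by linarith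
    have h3 := sq_eq_zero_iff.mp h2
    linarith
  · -- E(0) > 0 : ρ is strictly decreasing, but ρ(0) < 1/2 forces ρ(L) > ρ(0).
    exfalso
    have hanti : StrictAntiOn ρ (Set.Icc (0:ℝ) L) := by
      apply strictAntiOn_of_deriv_neg (convex_Icc 0 L) hρd.continuous.continuousOn
      intro x hx
      rw [interior_Icc] at hx
      have hxI := Set.Ioo_subset_Icc_self hx
      rw [hone x hxI]
      have h1 := hEval x hxI
      have h2 := Real.exp_pos (2*v/σ^2 * G x)
      have h3 : 0 < (ρ x - 1/2)^2 - (ρ 0 - 1/2)/2 := by nlinarith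
      exact div_neg_of_neg_of_pos (by nlinarith) hσ2
    have h01 : ρ L < ρ 0 := hanti h0L hLL hL
    have hρ0le : ρ 0 ≤ 1 := (hval 0 h0L).2
    have htpos : 0 < ρ 0 - 1/2 := by linarith
    nlinarith [mul_nonneg htpos.le (show (0:ℝ) ≤ 1 - ρ 0 by linarith)]
end
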